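/- If F is a face of a convex set C, then F equals the intersection of the affine hull of F with C. -/

import Mathlib

/-- A face of a convex set `C`. -/
def IsFace {V : Type*} [AddCommGroup V] [Module ℝ V] (C F : Set V) : Prop :=
  F.Nonempty ∧ F ⊆ C ∧ Convex ℝ F ∧
    ∀ v ∈ C, ∀ w ∈ C, ∀ p : ℝ, 0 < p → p < 1 → p • v + (1 - p) • w ∈ F → v ∈ F ∧ w ∈ F

/-- If `F` is a face of a convex set `C`, then `F` equals the intersection of the
affine hull of `F` with `C`. -/
theorem face_eq_affineSpan_inter {V : Type*} [AddCommGroup V] [Module ℝ V]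
    {C F : Set V} (hC : Convex ℝ C) (hF : IsFace C F) :
    F = (affineSpan ℝ F : Set V) ∩ C := by
  obtain ⟨hne, hFC, hconv, hface⟩ := hF
  apply Set.Subset.antisymm
  · exact fun x hx => ⟨subset_affineSpan ℝ F hx, hFC hx⟩
  rintro x ⟨hxA, hxC⟩
  classical
  rw [show F = Set.range ((↑) : F → V) from (Subtype.range_coe).symm] at hxA
  obtain ⟨s, w, hw, hx⟩ := eq_affineCombination_of_mem_affineSpan hxA
  rw [Finset.affineCombination_eq_linear_combination _ _ _ hw] at hx
  set P := s.filter (fun i => 0 < w i) with hP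
  set N := s.filter (fun i => ¬ 0 < w i) with hN
  have hsplit : ∑ i ∈ P, w i + ∑ i ∈ N, w i = 1 := by
    rw [Finset.sum_filter_add_sum_filter_not s (fun i => 0 < w i)]; exact hw
  set b : ℝ := ∑ i ∈ N, (-(w i)) with hb
  have hbN : ∑ i ∈ N, w i = -b := by simp [hb]
  have hbnn : 0 ≤ b :=
    Finset.sum_nonneg fun i hi => by
      have := (Finset.mem_filter.mp hi).2; linarith [not_lt.mp this]
  have haP : ∑ i ∈ P, w i = 1 + b := by linarith [hsplit, hbN]
  have haPpos : (0:ℝ) < ∑ i ∈ P, w i := by rw [haP]; linarith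
  have hPw : ∀ i ∈ P, 0 ≤ w i := fun i hi => le_of_lt (Finset.mem_filter.mp hi).2
  set u : V := P.centerMass w (fun i => (i : V)) with hu
  have huF : u ∈ F := hconv.centerMass_mem hPw haPpos (fun i _ => i.2)
  have hPsum : ∑ i ∈ P, w i • (i : V) = (1 + b) • u := by
    rw [hu, Finset.centerMass, smul_smul, haP]
    rw [mul_inv_cancel₀ (by linarith : (1:ℝ) + b ≠ 0), one_smul]
  have hxsplit : x = ∑ i ∈ P, w i • (i : V) + ∑ i ∈ N, w i • (i : V) := by
    rw [hx, Finset.sum_filter_add_sum_filter_not s (fun i => 0 < w i)]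
  rcases eq_or_lt_of_le hbnn with hb0 | hbpos
  · -- b = 0 : all weights in N vanish
    have hNzero : ∀ i ∈ N, -(w i) = 0 := by
      rw [← Finset.sum_eq_zero_iff_of_nonneg
        (fun i hi => by have := (Finset.mem_filter.mp hi).2; linarith [not_lt.mp this])]
      exact hb0.symm
    have hNsum : ∑ i ∈ N, w i • (i : V) = 0 :=
      Finset.sum_eq_zero fun i hi => by
        have : w i = 0 := by have := hNzero i hi; linarith
        simp [this]
    have : x = u := by
      rw [hxsplit, hNsum, add_zero, hPsum, ← hb0]
      simp
    rwa [this]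
  · -- b > 0
    set v : V := N.centerMass (fun i => -(w i)) (fun i => (i : V)) with hv
    have hvF : v ∈ F := hconv.centerMass_mem
      (fun i hi => by have := (Finset.mem_filter.mp hi).2; linarith [not_lt.mp this])
      (by rw [← hb]; exact hbpos) (fun i _ => i.2)
    have hNsum : ∑ i ∈ N, w i • (i : V) = -(b • v) := by
      rw [hv, Finset.centerMass, smul_smul, ← hb,
        mul_inv_cancel₀ (ne_of_gt hbpos), one_smul, ← Finset.sum_neg_distrib]
      simp
    have hxe : x = (1 + b) • u - b • v := by
      rw [hxsplit, hPsum, hNsum]; abel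
    set p : ℝ := 1 / (1 + b) with hp
    have hppos : 0 < p := by positivity
    have hplt : p < 1 := by
      rw [hp, div_lt_one (by linarith)]; linarith
    have hcomb : p • x + (1 - p) • v = u := by
      have h1b : (1:ℝ) + b ≠ 0 := by linarith
      apply smul_right_injective V h1b
      show (1 + b) • (p • x + (1 - p) • v) = (1 + b) • u
      rw [hxe, smul_add, smul_smul, smul_smul]
      have e1 : (1 + b) * p = 1 := by rw [hp, mul_one_div_cancel h1b]
      have e2 : (1 + b) * (1 - p) = b := by rw [hp, mul_sub, mul_one_div_cancel h1b]; ring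
      rw [e1, e2, one_smul]
      module
    exact (hface x hxC v (hFC hvF) p hppos hplt (hcomb ▸ huF)).1
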